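/- Let G=(V,E) be a k-uniform hypergraph with Laplacian tensor L and signless Laplacian tensor Q. Then λ(L) ≤ λ(Q). If furthermore G is connected and k is even, then λ(L) = λ(Q) if and only if G is odd-bipartite. -/
import Mathlib


open Finset

variable {α : Type*} [DecidableEq α]

/-- The degree of a vertex `i`: the number of edges containing `i`. -/
def hdeg (E : Finset (Finset α)) (i : α) : ℕ := (E.filter (fun e => i ∈ e)).card

/-- The action of the Laplacian tensor: `(L x^{k-1})_i`. -/
def lapAct (k : ℕ) (E : Finset (Finset α)) (x : α → ℝ) (i : α) : ℝ :=
  (hdeg E i : ℝ) * x i ^ (k - 1) - ∑ e ∈ E.filter (fun e => i ∈ e), ∏ j ∈ e.erase i, x j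

/-- The action of the signless Laplacian tensor: `(Q x^{k-1})_i`. -/
def signAct (k : ℕ) (E : Finset (Finset α)) (x : α → ℝ) (i : α) : ℝ :=
  (hdeg E i : ℝ) * x i ^ (k - 1) + ∑ e ∈ E.filter (fun e => i ∈ e), ∏ j ∈ e.erase i, x j

/-- The action of the adjacency tensor: `(A x^{k-1})_i`. -/
def adjAct (E : Finset (Finset α)) (x : α → ℝ) (i : α) : ℝ :=
  ∑ e ∈ E.filter (fun e => i ∈ e), ∏ j ∈ e.erase i, x j

/-- `lam` is an H-eigenvalue of the Laplacian tensor. -/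
def IsLapEig (k : ℕ) (E : Finset (Finset α)) (lam : ℝ) : Prop :=
  ∃ x : α → ℝ, x ≠ 0 ∧ ∀ i, lapAct k E x i = lam * x i ^ (k - 1)

/-- `lam` is the largest H-eigenvalue of the Laplacian tensor. -/
def IsLargestLapEig (k : ℕ) (E : Finset (Finset α)) (lam : ℝ) : Prop :=
  IsLapEig k E lam ∧ ∀ mu : ℝ, IsLapEig k E mu → mu ≤ lam

/-- `lam` is an H-eigenvalue of the signless Laplacian tensor. -/
def IsSignEig (k : ℕ) (E : Finset (Finset α)) (lam : ℝ) : Prop :=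
  ∃ x : α → ℝ, x ≠ 0 ∧ ∀ i, signAct k E x i = lam * x i ^ (k - 1)

/-- `lam` is the largest H-eigenvalue of the signless Laplacian tensor. -/
def IsLargestSignEig (k : ℕ) (E : Finset (Finset α)) (lam : ℝ) : Prop :=
  IsSignEig k E lam ∧ ∀ mu : ℝ, IsSignEig k E mu → mu ≤ lam

/-- `lam` is an H-eigenvalue of the adjacency tensor. -/
def IsAdjEig (k : ℕ) (E : Finset (Finset α)) (lam : ℝ) : Prop :=
  ∃ x : α → ℝ, x ≠ 0 ∧ ∀ i, adjAct E x i = lam * x i ^ (k - 1)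

/-- `lam` is the largest H-eigenvalue of the adjacency tensor. -/
def IsLargestAdjEig (k : ℕ) (E : Finset (Finset α)) (lam : ℝ) : Prop :=
  IsAdjEig k E lam ∧ ∀ mu : ℝ, IsAdjEig k E mu → mu ≤ lam

/-- `G = (V, E)` is a `k`-uniform hyperstar of size `d`: there is a heart `h` and a
disjoint partition of the remaining vertices into `d` parts of size `k-1`, the edges
being the heart together with one part. -/
def IsHyperstar (k d : ℕ) (E : Finset (Finset α)) : Prop :=
  ∃ (h : α) (P : Fin d → Finset α),
    (∀ i, h ∉ P i) ∧
    (∀ i, (P i).card = k - 1) ∧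
    (∀ i j, i ≠ j → Disjoint (P i) (P j)) ∧
    (∀ v : α, v ≠ h → ∃ i, v ∈ P i) ∧
    E = Finset.image (fun i => insert h (P i)) Finset.univ

/-- The hypergraph is connected: any two distinct vertices are joined by a chain of
pairwise intersecting edges. -/
def IsConnectedH (E : Finset (Finset α)) : Prop :=
  ∀ i j : α, i ≠ j → Relation.TransGen (fun a b : α => ∃ e ∈ E, a ∈ e ∧ b ∈ e) i j

/-- For `k` even: the hypergraph is odd-bipartite. -/
def IsOddBipartite [Fintype α] (E : Finset (Finset α)) : Prop :=
  E = ∅ ∨ ∃ V₁ : Finset α, V₁ ≠ ∅ ∧ V₁ ≠ Finset.univ ∧ ∀ e ∈ E, Odd (e ∩ V₁).card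

/-- `G = (V, E)` is a `k`-uniform hypercycle of size `s`. -/
def IsHypercycle (k : ℕ) (s : ℕ) [NeZero s] (E : Finset (Finset α)) : Prop :=
  ∃ P : Fin s → Finset α,
    (∀ i, (P i).card = k) ∧
    (∀ v : α, ∃ i, v ∈ P i) ∧
    E = Finset.image P Finset.univ ∧
    (∀ i : Fin s, (P i ∩ P (i + 1)).card = 1) ∧
    (∀ i j : Fin s, i ≠ j → j ≠ i + 1 → i ≠ j + 1 → P i ∩ P j = ∅) ∧
    Function.Injective (fun i : Fin s => P i ∩ P (i + 1))
section MyAux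
variable {n k : ℕ}
variable {n k : ℕ}

/-- `g x = ∑ x_i^k`. -/
def gfun (n k : ℕ) (x : Fin n → ℝ) : ℝ := ∑ i, x i ^ k

/-- `F x = Q x^k` in edge form. -/
def Ffun (n k : ℕ) (E : Finset (Finset (Fin n))) (x : Fin n → ℝ) : ℝ :=
  (∑ i, (hdeg E i : ℝ) * x i ^ k) + k * ∑ e ∈ E, ∏ j ∈ e, x j

lemma sum_mul_adjAct (E : Finset (Finset (Fin n))) (x : Fin n → ℝ) :
    ∑ i, x i * adjAct E x i = ∑ e ∈ E, (e.card : ℝ) * ∏ j ∈ e, x j := by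
  unfold adjAct
  calc ∑ i, x i * ∑ e ∈ E.filter (fun e => i ∈ e), ∏ j ∈ e.erase i, x j
      = ∑ i, ∑ e ∈ E.filter (fun e => i ∈ e), x i * ∏ j ∈ e.erase i, x j := by
        simp [Finset.mul_sum]
    _ = ∑ i, ∑ e ∈ E, if i ∈ e then x i * ∏ j ∈ e.erase i, x j else 0 := by
        simp [Finset.sum_filter]
    _ = ∑ e ∈ E, ∑ i, if i ∈ e then x i * ∏ j ∈ e.erase i, x j else 0 := Finset.sum_comm
    _ = ∑ e ∈ E, ∑ i ∈ e, x i * ∏ j ∈ e.erase i, x j := by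
        refine Finset.sum_congr rfl fun e _ => ?_
        rw [Finset.sum_ite_mem, Finset.univ_inter]
    _ = ∑ e ∈ E, ∑ i ∈ e, ∏ j ∈ e, x j := by
        refine Finset.sum_congr rfl fun e _ => Finset.sum_congr rfl fun i hi => ?_
        exact Finset.mul_prod_erase e x hi
    _ = ∑ e ∈ E, (e.card : ℝ) * ∏ j ∈ e, x j := by
        simp [Finset.sum_const, nsmul_eq_mul]

lemma Ffun_eq_sum (hk : 1 ≤ k) (E : Finset (Finset (Fin n))) (hunif : ∀ e ∈ E, e.card = k)
    (x : Fin n → ℝ) : Ffun n k E x = ∑ i, x i * signAct k E x i := by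
  have h1 : ∀ i, x i * signAct k E x i
      = (hdeg E i : ℝ) * x i ^ k + x i * adjAct E x i := by
    intro i
    have hx : x i * x i ^ (k - 1) = x i ^ k := by
      rw [← pow_succ']; congr 1; omega
    simp only [signAct, adjAct]
    rw [mul_add, show x i * ((hdeg E i : ℝ) * x i ^ (k-1)) = (hdeg E i : ℝ) * (x i * x i ^ (k-1)) from by ring, hx]
  rw [Finset.sum_congr rfl fun i _ => h1 i, Finset.sum_add_distrib, sum_mul_adjAct]
  have : ∑ e ∈ E, (e.card : ℝ) * ∏ j ∈ e, x j = k * ∑ e ∈ E, ∏ j ∈ e, x j := by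
    rw [Finset.mul_sum]
    exact Finset.sum_congr rfl fun e he => by rw [hunif e he]
  rw [this, Ffun]

lemma gfun_smul (c : ℝ) (x : Fin n → ℝ) : gfun n k (fun i => c * x i) = c ^ k * gfun n k x := by
  simp [gfun, mul_pow, Finset.mul_sum]

lemma prod_edge_smul {E : Finset (Finset (Fin n))} (hunif : ∀ e ∈ E, e.card = k)
    {e : Finset (Fin n)} (he : e ∈ E) (c : ℝ) (x : Fin n → ℝ) :
    ∏ j ∈ e, (c * x j) = c ^ k * ∏ j ∈ e, x j := by
  rw [Finset.prod_mul_distrib, Finset.prod_const, hunif e he]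

lemma Ffun_smul {E : Finset (Finset (Fin n))} (hunif : ∀ e ∈ E, e.card = k)
    (c : ℝ) (x : Fin n → ℝ) : Ffun n k E (fun i => c * x i) = c ^ k * Ffun n k E x := by
  unfold Ffun
  rw [mul_add, Finset.mul_sum, Finset.mul_sum, Finset.mul_sum]
  congr 1
  · exact Finset.sum_congr rfl fun i _ => by rw [mul_pow]; ring
  · rw [Finset.mul_sum]
    refine Finset.sum_congr rfl fun e he => ?_
    rw [prod_edge_smul hunif he]; ring

lemma signAct_smul {E : Finset (Finset (Fin n))} (hunif : ∀ e ∈ E, e.card = k)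
    (c : ℝ) (x : Fin n → ℝ) (i : Fin n) :
    signAct k E (fun j => c * x j) i = c ^ (k - 1) * signAct k E x i := by
  unfold signAct
  rw [mul_add, Finset.mul_sum]
  congr 1
  · rw [mul_pow]; ring
  · refine Finset.sum_congr rfl fun e he => ?_
    rw [Finset.mem_filter] at he
    rw [Finset.prod_mul_distrib, Finset.prod_const, Finset.card_erase_of_mem he.2, hunif e he.1]

lemma Ffun_nonneg {E : Finset (Finset (Fin n))} {x : Fin n → ℝ} (hx : ∀ i, 0 ≤ x i) :
    0 ≤ Ffun n k E x := by
  unfold Ffun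
  have h1 : (0:ℝ) ≤ ∑ i, (hdeg E i : ℝ) * x i ^ k :=
    Finset.sum_nonneg fun i _ => mul_nonneg (Nat.cast_nonneg _) (pow_nonneg (hx i) _)
  have h2 : (0:ℝ) ≤ ∑ e ∈ E, ∏ j ∈ e, x j :=
    Finset.sum_nonneg fun e _ => Finset.prod_nonneg fun j _ => hx j
  positivity

/-- For an L-eigenpair, `λ ⬝ g x = ∑ d_i x_i^k - k ∑_e ∏_e x`. -/
lemma lap_eig_sum (hk : 1 ≤ k) {E : Finset (Finset (Fin n))} (hunif : ∀ e ∈ E, e.card = k)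
    {lam : ℝ} {x : Fin n → ℝ} (hx : ∀ i, lapAct k E x i = lam * x i ^ (k - 1)) :
    lam * gfun n k x = (∑ i, (hdeg E i : ℝ) * x i ^ k) - k * ∑ e ∈ E, ∏ j ∈ e, x j := by
  have key : ∀ i, x i * lapAct k E x i = (hdeg E i : ℝ) * x i ^ k - x i * adjAct E x i := by
    intro i
    have hxp : x i * x i ^ (k - 1) = x i ^ k := by rw [← pow_succ']; congr 1; omega
    simp only [lapAct, adjAct]
    rw [mul_sub, show x i * ((hdeg E i : ℝ) * x i ^ (k-1)) = (hdeg E i : ℝ) * (x i * x i ^ (k-1)) from by ring, hxp]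
  have h2 : ∀ i, x i * lapAct k E x i = lam * x i ^ k := by
    intro i
    have hxp : x i * x i ^ (k - 1) = x i ^ k := by rw [← pow_succ']; congr 1; omega
    rw [hx i, show x i * (lam * x i ^ (k-1)) = lam * (x i * x i ^ (k-1)) from by ring, hxp]
  have := Finset.sum_congr rfl fun i (_ : i ∈ Finset.univ) => (h2 i).symm.trans (key i)
  rw [gfun, Finset.mul_sum]
  rw [show ∑ i, lam * x i ^ k = ∑ i, ((hdeg E i : ℝ) * x i ^ k - x i * adjAct E x i) from this,
    Finset.sum_sub_distrib, sum_mul_adjAct]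
  congr 1
  rw [Finset.mul_sum]
  exact Finset.sum_congr rfl fun e he => by rw [hunif e he]

variable {n k : ℕ}


lemma exists_maximizer (hn : 0 < n) (hk : 1 ≤ k) (F : (Fin n → ℝ) → ℝ) (hF : Continuous F) :
    ∃ y : Fin n → ℝ, (∀ i, 0 ≤ y i) ∧ gfun n k y = 1 ∧
      ∀ w : Fin n → ℝ, (∀ i, 0 ≤ w i) → gfun n k w = 1 → F w ≤ F y := by
  set K : Set (Fin n → ℝ) := {y | (∀ i, 0 ≤ y i) ∧ gfun n k y = 1} with hK
  have hg : Continuous (gfun n k) := by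
    unfold gfun; exact continuous_finset_sum _ fun i _ => (continuous_apply i).pow k
  have h1 : IsClosed {y : Fin n → ℝ | ∀ i, 0 ≤ y i} := by
    have h := isClosed_iInter (fun i : Fin n =>
      isClosed_le (continuous_const : Continuous fun _ : Fin n → ℝ => (0:ℝ)) (continuous_apply i))
    convert h using 1
    ext y; simp [Set.mem_iInter]
  have hclosed : IsClosed K := h1.inter (isClosed_eq hg continuous_const)
  have hsub : K ⊆ Set.Icc (fun _ => (0:ℝ)) (fun _ => 1) := by
    rintro y ⟨hy0, hy1⟩
    constructor
    · intro i; exact hy0 i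
    · intro i
      have h2 : y i ^ k ≤ 1 := by
        rw [← hy1]
        exact Finset.single_le_sum (fun j _ => pow_nonneg (hy0 j) k) (Finset.mem_univ i)
      exact (pow_le_one_iff_of_nonneg (hy0 i) (by omega)).mp h2
  have hcpt : IsCompact K := (isCompact_Icc).of_isClosed_subset hclosed hsub
  have hne : K.Nonempty := by
    refine ⟨fun j => if j = ⟨0, hn⟩ then 1 else 0, fun i => by positivity, ?_⟩
    unfold gfun
    rw [Finset.sum_eq_single ⟨0, hn⟩]
    · simp
    · intro b _ hb; simp only [if_neg hb]; exact zero_pow (by omega)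
    · intro h; exact absurd (Finset.mem_univ _) h
  obtain ⟨y, hyK, hmax⟩ := hcpt.exists_isMaxOn hne hF.continuousOn
  exact ⟨y, hyK.1, hyK.2, fun w hw0 hw1 => hmax ⟨hw0, hw1⟩⟩

lemma exists_pos_of_deriv_pos {h : ℝ → ℝ} {D : ℝ} (hd : HasDerivAt h D 0) (h0 : h 0 = 0)
    (hD : 0 < D) : ∃ t : ℝ, 0 < t ∧ 0 < h t := by
  have htend := hasDerivAt_iff_tendsto_slope.mp hd
  have hev : ∀ᶠ t in nhdsWithin (0:ℝ) {(0:ℝ)}ᶜ, 0 < slope h 0 t :=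
    htend.eventually (lt_mem_nhds hD)
  have hmono : nhdsWithin (0:ℝ) (Set.Ioi 0) ≤ nhdsWithin 0 {(0:ℝ)}ᶜ :=
    nhdsWithin_mono 0 (fun x hx => ne_of_gt hx)
  have hev2 : ∀ᶠ t in nhdsWithin (0:ℝ) (Set.Ioi 0), 0 < slope h 0 t := hev.filter_mono hmono
  obtain ⟨t, ht1, ht2⟩ := (hev2.and self_mem_nhdsWithin).exists
  refine ⟨t, ht2, ?_⟩
  have hs : slope h 0 t = h t / t := by simp [slope_def_field, h0]
  rw [hs] at ht1
  have := mul_pos ht1 ht2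
  rwa [div_mul_cancel₀] at this
  exact ne_of_gt ht2

lemma max_bound (hk : 1 ≤ k) {E : Finset (Finset (Fin n))} (hunif : ∀ e ∈ E, e.card = k)
    {y : Fin n → ℝ} (hy1 : gfun n k y = 1)
    (hmax : ∀ w : Fin n → ℝ, (∀ i, 0 ≤ w i) → gfun n k w = 1 → Ffun n k E w ≤ Ffun n k E y)
    {z : Fin n → ℝ} (hz : ∀ i, 0 ≤ z i) :
    Ffun n k E z ≤ Ffun n k E y * gfun n k z := by
  by_cases hz0 : ∀ i, z i = 0
  · have hg0 : gfun n k z = 0 := by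
      unfold gfun; exact Finset.sum_eq_zero fun i _ => by rw [hz0 i]; exact zero_pow (by omega)
    have hF0 : Ffun n k E z = 0 := by
      unfold Ffun
      have h1 : ∑ i, (hdeg E i : ℝ) * z i ^ k = 0 :=
        Finset.sum_eq_zero fun i _ => by rw [hz0 i, zero_pow (by omega : k ≠ 0), mul_zero]
      have h2 : ∑ e ∈ E, ∏ j ∈ e, z j = 0 := by
        refine Finset.sum_eq_zero fun e he => ?_
        have hne : e.Nonempty := by
          rw [← Finset.card_pos, hunif e he]; omega
        obtain ⟨j, hj⟩ := hne
        exact Finset.prod_eq_zero hj (hz0 j)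
      rw [h1, h2, mul_zero, add_zero]
    rw [hF0, hg0, mul_zero]
  · push_neg at hz0
    obtain ⟨i0, hi0⟩ := hz0
    have hgpos : 0 < gfun n k z := by
      refine Finset.sum_pos' (fun i _ => pow_nonneg (hz i) k) ⟨i0, Finset.mem_univ i0, ?_⟩
      exact pow_pos (lt_of_le_of_ne (hz i0) (Ne.symm hi0)) k
    set c : ℝ := (gfun n k z) ^ (-(1:ℝ)/k) with hc
    have hcpos : 0 < c := Real.rpow_pos_of_pos hgpos _
    have hck : c ^ k = (gfun n k z)⁻¹ := by
      rw [hc, ← Real.rpow_natCast ((gfun n k z) ^ (-(1:ℝ)/k)) k, ← Real.rpow_mul hgpos.le]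
      rw [show (-(1:ℝ)/k) * (k:ℝ) = -1 by
        field_simp]
      rw [Real.rpow_neg_one]
    have hgw : gfun n k (fun i => c * z i) = 1 := by
      rw [gfun_smul, hck, inv_mul_cancel₀ (ne_of_gt hgpos)]
    have hFw : Ffun n k E (fun i => c * z i) ≤ Ffun n k E y :=
      hmax _ (fun i => mul_nonneg hcpos.le (hz i)) hgw
    rw [Ffun_smul hunif, hck] at hFw
    calc Ffun n k E z = gfun n k z * ((gfun n k z)⁻¹ * Ffun n k E z) := by
          field_simp
      _ ≤ gfun n k z * Ffun n k E y := by
          exact mul_le_mul_of_nonneg_left hFw hgpos.le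
      _ = Ffun n k E y * gfun n k z := mul_comm _ _

lemma gfun_update (y : Fin n → ℝ) (i : Fin n) (v : ℝ) :
    gfun n k (Function.update y i v) = gfun n k y + (v ^ k - y i ^ k) := by
  unfold gfun
  rw [← Finset.sum_erase_add _ _ (Finset.mem_univ i), ← Finset.sum_erase_add _ (fun j => y j ^ k) (Finset.mem_univ i)]
  have h1 : ∑ j ∈ Finset.univ.erase i, (Function.update y i v) j ^ k
      = ∑ j ∈ Finset.univ.erase i, y j ^ k := by
    refine Finset.sum_congr rfl fun j hj => ?_
    rw [Function.update_of_ne (Finset.ne_of_mem_erase hj)]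
  rw [h1, Function.update_self]; ring

lemma Ffun_update {E : Finset (Finset (Fin n))} (hunif : ∀ e ∈ E, e.card = k)
    (y : Fin n → ℝ) (i : Fin n) (v : ℝ) :
    Ffun n k E (Function.update y i v) =
      Ffun n k E y + (hdeg E i : ℝ) * (v ^ k - y i ^ k) + k * ((v - y i) * adjAct E y i) := by
  unfold Ffun
  have hdsum : ∑ j, (hdeg E j : ℝ) * (Function.update y i v) j ^ k
      = (∑ j, (hdeg E j : ℝ) * y j ^ k) + (hdeg E i : ℝ) * (v ^ k - y i ^ k) := by
    rw [← Finset.sum_erase_add _ _ (Finset.mem_univ i),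
      ← Finset.sum_erase_add _ (fun j => (hdeg E j : ℝ) * y j ^ k) (Finset.mem_univ i)]
    have h1 : ∑ j ∈ Finset.univ.erase i, (hdeg E j : ℝ) * (Function.update y i v) j ^ k
        = ∑ j ∈ Finset.univ.erase i, (hdeg E j : ℝ) * y j ^ k := by
      refine Finset.sum_congr rfl fun j hj => ?_
      rw [Function.update_of_ne (Finset.ne_of_mem_erase hj)]
    rw [h1, Function.update_self]; ring
  have hesum : ∑ e ∈ E, ∏ j ∈ e, (Function.update y i v) j
      = (∑ e ∈ E, ∏ j ∈ e, y j) + (v - y i) * adjAct E y i := by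
    rw [← Finset.sum_filter_add_sum_filter_not E (fun e => i ∈ e),
      ← Finset.sum_filter_add_sum_filter_not E (fun e => i ∈ e) (fun e => ∏ j ∈ e, y j)]
    have hnot : ∑ e ∈ E.filter (fun e => ¬ i ∈ e), ∏ j ∈ e, (Function.update y i v) j
        = ∑ e ∈ E.filter (fun e => ¬ i ∈ e), ∏ j ∈ e, y j := by
      refine Finset.sum_congr rfl fun e he => Finset.prod_congr rfl fun j hj => ?_
      rw [Finset.mem_filter] at he
      exact Function.update_of_ne (by rintro rfl; exact he.2 hj) _ _
    have hyes : ∑ e ∈ E.filter (fun e => i ∈ e), ∏ j ∈ e, (Function.update y i v) j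
        = (∑ e ∈ E.filter (fun e => i ∈ e), ∏ j ∈ e, y j) + (v - y i) * adjAct E y i := by
      unfold adjAct
      rw [Finset.mul_sum, ← Finset.sum_add_distrib]
      refine Finset.sum_congr rfl fun e he => ?_
      rw [Finset.mem_filter] at he
      have herase : ∏ j ∈ e.erase i, (Function.update y i v) j = ∏ j ∈ e.erase i, y j := by
        refine Finset.prod_congr rfl fun j hj => ?_
        exact Function.update_of_ne (Finset.ne_of_mem_erase hj) _ _
      rw [← Finset.mul_prod_erase e _ he.2, ← Finset.mul_prod_erase e y he.2, herase,
        Function.update_self]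
      ring
    rw [hnot, hyes]; ring
  rw [hdsum, hesum]; ring
end MyAux

lemma maximizer_is_eig (hk : 3 ≤ k) {E : Finset (Finset (Fin n))} (hunif : ∀ e ∈ E, e.card = k)
    {y : Fin n → ℝ} (hy0 : ∀ i, 0 ≤ y i) (hy1 : gfun n k y = 1)
    (hmax : ∀ w : Fin n → ℝ, (∀ i, 0 ≤ w i) → gfun n k w = 1 → Ffun n k E w ≤ Ffun n k E y) :
    ∀ i, signAct k E y i = (Ffun n k E y) * y i ^ (k - 1) := by
  set M := Ffun n k E y with hM
  have key : ∀ i, signAct k E y i ≤ M * y i ^ (k - 1) := by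
    intro i
    by_contra hlt
    push_neg at hlt
    set u := y i with hu
    set A := adjAct E y i with hA
    set a := (hdeg E i : ℝ) - M with ha
    set b := (k : ℝ) * A with hb
    set h : ℝ → ℝ := fun t => a * ((u + t) ^ k - u ^ k) + b * t with hh
    have hd1 : HasDerivAt (fun t : ℝ => u + t) 1 0 := by
      simpa using (hasDerivAt_id (0:ℝ)).const_add u
    have hd2 : HasDerivAt (fun t : ℝ => (u + t) ^ k) ((k : ℝ) * (u + 0) ^ (k - 1) * 1) 0 := hd1.pow k
    have hd3 : HasDerivAt h (a * ((k : ℝ) * (u + 0) ^ (k - 1) * 1) + b * 1) 0 := by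
      exact ((hd2.sub_const (u ^ k)).const_mul a).add ((hasDerivAt_id 0).const_mul b)
    have hD : 0 < a * ((k : ℝ) * (u + 0) ^ (k - 1) * 1) + b * 1 := by
      have hs : signAct k E y i = (hdeg E i : ℝ) * u ^ (k - 1) + A := rfl
      have hkpos : (0:ℝ) < k := by positivity
      rw [hs] at hlt
      rw [add_zero]
      have : a * ((k:ℝ) * u ^ (k-1) * 1) + b * 1
          = (k:ℝ) * (((hdeg E i : ℝ) * u ^ (k-1) + A) - M * u ^ (k-1)) := by
        rw [ha, hb]; ring
      rw [this]
      exact mul_pos hkpos (by linarith)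
    have h0 : h 0 = 0 := by simp [hh]
    obtain ⟨t, htpos, hht⟩ := exists_pos_of_deriv_pos hd3 h0 hD
    set w := Function.update y i (u + t) with hw
    have hw0 : ∀ j, 0 ≤ w j := by
      intro j
      rcases eq_or_ne j i with rfl | hji
      · rw [hw, Function.update_self]; have h0u : (0:ℝ) ≤ u := hy0 j; linarith
      · rw [hw, Function.update_of_ne hji]; exact hy0 j
    have hineq := max_bound (by omega) hunif hy1 hmax hw0
    rw [Ffun_update hunif, gfun_update, hy1] at hineq
    rw [← hM] at hineq
    have : M * (1 + ((u + t) ^ k - y i ^ k)) < M + (hdeg E i : ℝ) * ((u + t) ^ k - y i ^ k)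
        + (k : ℝ) * (((u + t) - y i) * A) := by
      have hht' : 0 < a * ((u + t) ^ k - u ^ k) + b * t := hht
      rw [ha, hb] at hht'
      rw [← hu]
      nlinarith [hht']
    rw [← hu] at hineq
    linarith
  have hsum1 : ∑ i, y i * signAct k E y i = M := by
    rw [← Ffun_eq_sum (by omega) E hunif y]
  have hsum2 : ∑ i, y i * (M * y i ^ (k - 1)) = M := by
    have : ∀ i, y i * (M * y i ^ (k - 1)) = M * y i ^ k := by
      intro i
      have hxp : y i * y i ^ (k - 1) = y i ^ k := by
        rw [← pow_succ']; congr 1; omega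
      rw [show y i * (M * y i ^ (k-1)) = M * (y i * y i ^ (k-1)) from by ring, hxp]
    rw [Finset.sum_congr rfl fun i _ => this i, ← Finset.mul_sum, ← gfun, hy1, mul_one]
  have hzero : ∑ i, y i * (M * y i ^ (k - 1) - signAct k E y i) = 0 := by
    have : ∀ i, y i * (M * y i ^ (k - 1) - signAct k E y i)
        = y i * (M * y i ^ (k - 1)) - y i * signAct k E y i := fun i => by ring
    rw [Finset.sum_congr rfl fun i _ => this i, Finset.sum_sub_distrib, hsum1, hsum2, sub_self]
  have hterm : ∀ i ∈ Finset.univ, (0:ℝ) ≤ y i * (M * y i ^ (k - 1) - signAct k E y i) :=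
    fun i _ => mul_nonneg (hy0 i) (by linarith [key i])
  have hall := (Finset.sum_eq_zero_iff_of_nonneg hterm).mp hzero
  intro i
  rcases eq_or_lt_of_le (hy0 i) with hyi | hyi
  · have hs0 : signAct k E y i = (hdeg E i : ℝ) * y i ^ (k - 1) + adjAct E y i := rfl
    have hzero_pow : y i ^ (k - 1) = 0 := by
      rw [← hyi]; exact zero_pow (by omega)
    have hA0 : 0 ≤ adjAct E y i := by
      unfold adjAct
      exact Finset.sum_nonneg fun e _ => Finset.prod_nonneg fun j _ => hy0 j
    have hle := key i
    rw [hs0, hzero_pow] at hle ⊢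
    rw [mul_zero] at hle ⊢
    linarith
  · have := hall i (Finset.mem_univ i)
    have h2 : M * y i ^ (k - 1) - signAct k E y i = 0 := by
      rcases mul_eq_zero.mp this with h | h
      · exact absurd h.symm (ne_of_lt hyi)
      · exact h
    linarith

lemma lap_abs_bound (hk1 : 1 ≤ k) {E : Finset (Finset (Fin n))} {lam : ℝ} (hlam : 0 ≤ lam)
    {x : Fin n → ℝ} (hx : ∀ i, lapAct k E x i = lam * x i ^ (k - 1)) (i : Fin n) :
    lam * |x i| ^ (k - 1) ≤ signAct k E (fun j => |x j|) i := by
  have h1 : lam * |x i| ^ (k - 1) = |lam * x i ^ (k - 1)| := by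
    rw [abs_mul, abs_pow, abs_of_nonneg hlam]
  rw [h1, ← hx i]
  unfold lapAct signAct
  have h2 : |(hdeg E i : ℝ) * x i ^ (k - 1) - ∑ e ∈ E.filter (fun e => i ∈ e), ∏ j ∈ e.erase i, x j|
      ≤ |(hdeg E i : ℝ) * x i ^ (k - 1)| + |∑ e ∈ E.filter (fun e => i ∈ e), ∏ j ∈ e.erase i, x j| := by
    exact abs_sub _ _
  refine h2.trans ?_
  have h3 : |(hdeg E i : ℝ) * x i ^ (k - 1)| = (hdeg E i : ℝ) * |x i| ^ (k - 1) := by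
    rw [abs_mul, abs_pow, Nat.abs_cast]
  have h4 : |∑ e ∈ E.filter (fun e => i ∈ e), ∏ j ∈ e.erase i, x j|
      ≤ ∑ e ∈ E.filter (fun e => i ∈ e), ∏ j ∈ e.erase i, |x j| := by
    refine (Finset.abs_sum_le_sum_abs _ _).trans ?_
    refine Finset.sum_le_sum fun e _ => ?_
    rw [Finset.abs_prod]
  rw [h3]
  linarith

lemma zero_lap_eig (hn : 0 < n) (E : Finset (Finset (Fin n))) : IsLapEig k E 0 := by
  refine ⟨fun _ => 1, ?_, ?_⟩
  · intro h
    have := congrFun h ⟨0, hn⟩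
    simp at this
  · intro i
    simp [lapAct, hdeg]

lemma exists_good_M (hn : 0 < n) (hk : 3 ≤ k) (E : Finset (Finset (Fin n)))
    (hunif : ∀ e ∈ E, e.card = k) :
    ∃ (M : ℝ), IsSignEig k E M ∧ 0 ≤ M ∧
      ∀ z : Fin n → ℝ, (∀ i, 0 ≤ z i) → Ffun n k E z ≤ M * gfun n k z := by
  have hFc : Continuous (Ffun n k E) := by
    unfold Ffun
    exact (continuous_finset_sum _ fun i _ =>
        continuous_const.mul ((continuous_apply i).pow k)).add
      (continuous_const.mul (continuous_finset_sum _ fun e _ =>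
        continuous_finset_prod _ fun j _ => continuous_apply j))
  obtain ⟨y, hy0, hy1, hmax⟩ := @exists_maximizer n k hn (by omega) (Ffun n k E) hFc
  refine ⟨Ffun n k E y, ⟨y, ?_, maximizer_is_eig hk hunif hy0 hy1 hmax⟩,
    Ffun_nonneg hy0, fun z hz => max_bound (by omega) hunif hy1 hmax hz⟩
  intro h
  rw [h] at hy1
  unfold gfun at hy1
  simp only [Pi.zero_apply] at hy1
  rw [Finset.sum_eq_zero (fun i _ => zero_pow (by omega : k ≠ 0))] at hy1
  exact one_ne_zero hy1.symm

lemma scale_to_sphere (hk1 : 1 ≤ k) {z : Fin n → ℝ} (hgz : 0 < gfun n k z) :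
    ∃ c : ℝ, 0 < c ∧ c ^ k = (gfun n k z)⁻¹ ∧ gfun n k (fun i => c * z i) = 1 := by
  refine ⟨(gfun n k z) ^ (-(1:ℝ)/k), Real.rpow_pos_of_pos hgz _, ?_, ?_⟩
  · rw [← Real.rpow_natCast ((gfun n k z) ^ (-(1:ℝ)/k)) k, ← Real.rpow_mul hgz.le]
    rw [show (-(1:ℝ)/k) * (k:ℝ) = -1 from by field_simp]
    exact Real.rpow_neg_one _
  · rw [gfun_smul]
    rw [← Real.rpow_natCast ((gfun n k z) ^ (-(1:ℝ)/k)) k, ← Real.rpow_mul hgz.le]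
    rw [show (-(1:ℝ)/k) * (k:ℝ) = -1 from by field_simp]
    rw [Real.rpow_neg_one]
    exact inv_mul_cancel₀ (ne_of_gt hgz)

lemma conn_edge (hn : 1 < n) {E : Finset (Finset (Fin n))} (hconn : IsConnectedH E) :
    E.Nonempty := by
  have hne : (⟨0, by omega⟩ : Fin n) ≠ ⟨1, by omega⟩ := by
    intro h
    simpa using congrArg Fin.val h
  cases hconn _ _ hne with
  | single h => obtain ⟨e, he, _⟩ := h; exact ⟨e, he⟩
  | tail _ h => obtain ⟨e, he, _⟩ := h; exact ⟨e, he⟩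

lemma exists_bridge {E : Finset (Finset (Fin n))} (hconn : IsConnectedH E)
    {z : Fin n → ℝ} {i j : Fin n} (hi : z i = 0) (hj : z j ≠ 0) :
    ∃ e ∈ E, (∃ a ∈ e, z a = 0) ∧ (∃ b ∈ e, z b ≠ 0) := by
  have hij : i ≠ j := fun h => hj (h ▸ hi)
  have key : ∀ jj : Fin n, Relation.TransGen (fun a b : Fin n => ∃ e ∈ E, a ∈ e ∧ b ∈ e) i jj →
      z jj ≠ 0 → ∃ e ∈ E, (∃ a ∈ e, z a = 0) ∧ (∃ b ∈ e, z b ≠ 0) := by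
    intro jj htg
    induction htg with
    | single h =>
      intro hzjj
      obtain ⟨e, he, hie, hje⟩ := h
      exact ⟨e, he, ⟨i, hie, hi⟩, ⟨_, hje, hzjj⟩⟩
    | @tail b c _ hbc ih =>
      intro hzc
      obtain ⟨e, he, hbe, hce⟩ := hbc
      by_cases hzb : z b = 0
      · exact ⟨e, he, ⟨b, hbe, hzb⟩, ⟨c, hce, hzc⟩⟩
      · exact ih hzb
  exact key j (hconn i j hij) hj

lemma neg_prod_odd {e : Finset (Fin n)} {x : Fin n → ℝ} (h : ∏ j ∈ e, x j < 0) :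
    Odd (e.filter (fun j => x j < 0)).card := by
  have hfac : ∀ j ∈ e, x j = (if x j < 0 then (-1:ℝ) else 1) * |x j| := by
    intro j _
    by_cases hj : x j < 0
    · rw [if_pos hj, abs_of_neg hj]; ring
    · rw [if_neg hj, abs_of_nonneg (not_lt.mp hj), one_mul]
  rw [Finset.prod_congr rfl hfac, Finset.prod_mul_distrib, Finset.prod_ite] at h
  simp only [Finset.prod_const, one_pow, mul_one] at h
  rcases Nat.even_or_odd (e.filter (fun j => x j < 0)).card with hev | hodd
  · exfalso
    rw [hev.neg_one_pow, one_mul] at h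
    exact absurd h (not_lt.mpr (Finset.prod_nonneg fun j _ => abs_nonneg _))
  · exact hodd

lemma prod_sigma_eq_neg_one {V₁ e : Finset (Fin n)} (hodd : Odd (e ∩ V₁).card) :
    ∏ j ∈ e, (if j ∈ V₁ then (-1:ℝ) else 1) = -1 := by
  rw [Finset.prod_ite, Finset.prod_const, Finset.prod_const, one_pow, mul_one,
    Finset.filter_mem_eq_inter]
  exact hodd.neg_one_pow

lemma sign_flip_eig (hk : 3 ≤ k) (hkeven : Even k) {E : Finset (Finset (Fin n))}
    {V₁ : Finset (Fin n)} (hodd : ∀ e ∈ E, Odd (e ∩ V₁).card) {mu : ℝ} {x : Fin n → ℝ}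
    (hx : x ≠ 0) (heig : ∀ i, signAct k E x i = mu * x i ^ (k - 1)) : IsLapEig k E mu := by
  set σ : Fin n → ℝ := fun i => if i ∈ V₁ then -1 else 1 with hσ
  have hσcases : ∀ i, σ i = 1 ∨ σ i = -1 := by
    intro i; by_cases h : i ∈ V₁ <;> simp [hσ, h]
  have hσne : ∀ i, σ i ≠ 0 := by
    intro i; rcases hσcases i with h | h <;> rw [h] <;> norm_num
  have hoddk1 : Odd (k - 1) := Nat.Even.sub_odd (by omega) hkeven odd_one
  have hσpow : ∀ i, σ i ^ (k - 1) = σ i := by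
    intro i
    rcases hσcases i with h | h <;> rw [h]
    · exact one_pow _
    · exact hoddk1.neg_one_pow
  refine ⟨fun i => σ i * x i, ?_, ?_⟩
  · intro h
    apply hx
    funext i
    have := congrFun h i
    simp only [Pi.zero_apply] at this
    rcases mul_eq_zero.mp this with h' | h'
    · exact absurd h' (hσne i)
    · simp [h']
  · intro i
    have herase : ∀ e ∈ E.filter (fun e => i ∈ e),
        ∏ j ∈ e.erase i, (σ j * x j) = (- σ i) * ∏ j ∈ e.erase i, x j := by
      intro e he
      rw [Finset.mem_filter] at he
      have h1 : σ i * ∏ j ∈ e.erase i, σ j = ∏ j ∈ e, σ j := Finset.mul_prod_erase e σ he.2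
      have h2 : ∏ j ∈ e, σ j = -1 := prod_sigma_eq_neg_one (hodd e he.1)
      have h3 : ∏ j ∈ e.erase i, σ j = - σ i := by
        have h4 : σ i * (- σ i) = -1 := by
          rcases hσcases i with h | h <;> rw [h] <;> norm_num
        apply mul_left_cancel₀ (hσne i)
        rw [h1, h2, h4]
      rw [Finset.prod_mul_distrib, h3]
    rw [lapAct]
    rw [Finset.sum_congr rfl herase, ← Finset.mul_sum]
    have h5 : (σ i * x i) ^ (k - 1) = σ i * x i ^ (k - 1) := by
      rw [mul_pow, hσpow]
    rw [h5]
    have h6 := heig i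
    rw [signAct] at h6
    calc (hdeg E i : ℝ) * (σ i * x i ^ (k-1)) - (- σ i) * ∑ e ∈ E.filter (fun e => i ∈ e), ∏ j ∈ e.erase i, x j
        = σ i * ((hdeg E i : ℝ) * x i ^ (k-1) + ∑ e ∈ E.filter (fun e => i ∈ e), ∏ j ∈ e.erase i, x j) := by ring
      _ = σ i * (mu * x i ^ (k-1)) := by rw [h6]
      _ = mu * (σ i * x i ^ (k-1)) := by ring

lemma no_zero_coord (hk : 3 ≤ k) {E : Finset (Finset (Fin n))} (hunif : ∀ e ∈ E, e.card = k)
    (hconn : IsConnectedH E) {M : ℝ}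
    (hbound : ∀ w : Fin n → ℝ, (∀ i, 0 ≤ w i) → Ffun n k E w ≤ M * gfun n k w)
    {z : Fin n → ℝ} (hz0 : ∀ i, 0 ≤ z i) (hgz : 0 < gfun n k z)
    (hFz : Ffun n k E z = M * gfun n k z) : ∀ i, 0 < z i := by
  classical
  have hM0 : 0 ≤ M := by
    have h1 : 0 ≤ Ffun n k E z := Ffun_nonneg hz0
    nlinarith
  by_contra hcon
  push_neg at hcon
  obtain ⟨i, hzi⟩ := hcon
  have hzi0 : z i = 0 := le_antisymm hzi (hz0 i)
  have hjex : ∃ j, z j ≠ 0 := by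
    by_contra hall
    push_neg at hall
    have hg0 : gfun n k z = 0 := by
      unfold gfun
      exact Finset.sum_eq_zero fun a _ => by rw [hall a]; exact zero_pow (by omega)
    rw [hg0] at hgz
    exact lt_irrefl 0 hgz
  obtain ⟨j, hzj⟩ := hjex
  obtain ⟨e₀, he₀, ⟨a, hae, hza⟩, ⟨b, hbe, hzb⟩⟩ := exists_bridge hconn hzi0 hzj
  set Z := Finset.univ.filter (fun a : Fin n => z a = 0) with hZ
  set z₀ := (e₀.filter (fun a => z a = 0)).card with hz₀def
  set P := ∏ a ∈ e₀.filter (fun a => ¬ z a = 0), z a with hPdef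
  have hPpos : 0 < P :=
    Finset.prod_pos fun a ha => lt_of_le_of_ne (hz0 a) (Ne.symm (Finset.mem_filter.mp ha).2)
  have hz₀1 : 1 ≤ z₀ := Finset.card_pos.mpr ⟨a, Finset.mem_filter.mpr ⟨hae, hza⟩⟩
  have hz₀k : z₀ + 1 ≤ k := by
    have hsplit := Finset.card_filter_add_card_filter_not (s := e₀) (p := fun a => z a = 0)
    have hb1 : 0 < (e₀.filter (fun a => ¬ z a = 0)).card :=
      Finset.card_pos.mpr ⟨b, Finset.mem_filter.mpr ⟨hbe, hzb⟩⟩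
    rw [hunif e₀ he₀] at hsplit
    omega
  have key : ∀ t : ℝ, 0 < t → (k:ℝ) * (t ^ z₀ * P) ≤ M * (Z.card * t ^ k) := by
    intro t ht
    set w : Fin n → ℝ := fun a => if z a = 0 then t else z a with hw
    have hwt : ∀ a, z a = 0 → w a = t := fun a h => by simp only [hw]; rw [if_pos h]
    have hwz : ∀ a, ¬ z a = 0 → w a = z a := fun a h => by simp only [hw]; rw [if_neg h]
    have hw0 : ∀ a, 0 ≤ w a := by
      intro a
      by_cases h : z a = 0
      · rw [hwt a h]; exact ht.le
      · rw [hwz a h]; exact hz0 a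
    have hzw : ∀ a, z a ≤ w a := by
      intro a
      by_cases h : z a = 0
      · rw [hwt a h, h]; exact ht.le
      · rw [hwz a h]
    have hgw : gfun n k w = gfun n k z + Z.card * t ^ k := by
      unfold gfun
      rw [← Finset.sum_filter_add_sum_filter_not Finset.univ (fun a => z a = 0) (fun a => w a ^ k),
        ← Finset.sum_filter_add_sum_filter_not Finset.univ (fun a => z a = 0) (fun a => z a ^ k)]
      have e1 : ∑ a ∈ Finset.univ.filter (fun a => z a = 0), w a ^ k = Z.card * t ^ k := by
        rw [Finset.sum_congr rfl (fun a ha => by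
          rw [hwt a (Finset.mem_filter.mp ha).2] : ∀ a ∈ Finset.univ.filter (fun a => z a = 0),
            w a ^ k = t ^ k), Finset.sum_const, nsmul_eq_mul, hZ]
      have e2 : ∑ a ∈ Finset.univ.filter (fun a => z a = 0), z a ^ k = 0 :=
        Finset.sum_eq_zero fun a ha => by
          rw [(Finset.mem_filter.mp ha).2]; exact zero_pow (by omega)
      have e3 : ∑ a ∈ Finset.univ.filter (fun a => ¬ z a = 0), w a ^ k
          = ∑ a ∈ Finset.univ.filter (fun a => ¬ z a = 0), z a ^ k :=
        Finset.sum_congr rfl fun a ha => by rw [hwz a (Finset.mem_filter.mp ha).2]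
      rw [e1, e2, e3]; ring
    have hFw : Ffun n k E z + (k:ℝ) * (t ^ z₀ * P) ≤ Ffun n k E w := by
      unfold Ffun
      have hd : ∑ a, (hdeg E a : ℝ) * z a ^ k ≤ ∑ a, (hdeg E a : ℝ) * w a ^ k :=
        Finset.sum_le_sum fun a _ =>
          mul_le_mul_of_nonneg_left (pow_le_pow_left₀ (hz0 a) (hzw a) k) (Nat.cast_nonneg _)
      have hedges : (∑ e ∈ E, ∏ j ∈ e, z j) + t ^ z₀ * P ≤ ∑ e ∈ E, ∏ j ∈ e, w j := by
        rw [← Finset.sum_erase_add E (fun e => ∏ j ∈ e, w j) he₀,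
          ← Finset.sum_erase_add E (fun e => ∏ j ∈ e, z j) he₀]
        have h1 : ∑ e ∈ E.erase e₀, ∏ j ∈ e, z j ≤ ∑ e ∈ E.erase e₀, ∏ j ∈ e, w j :=
          Finset.sum_le_sum fun e _ => Finset.prod_le_prod (fun j _ => hz0 j) (fun j _ => hzw j)
        have h2 : ∏ j ∈ e₀, z j = 0 := Finset.prod_eq_zero hae hza
        have h3 : ∏ j ∈ e₀, w j = t ^ z₀ * P := by
          rw [← Finset.prod_filter_mul_prod_filter_not e₀ (fun a => z a = 0) w]
          congr 1
          · rw [Finset.prod_congr rfl (fun a ha => by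
              rw [hwt a (Finset.mem_filter.mp ha).2] : ∀ a ∈ e₀.filter (fun a => z a = 0),
                w a = t), Finset.prod_const, hz₀def]
          · exact Finset.prod_congr rfl fun a ha => by rw [hwz a (Finset.mem_filter.mp ha).2]
        rw [h2, h3]
        linarith
      have hk0 : (0:ℝ) ≤ k := Nat.cast_nonneg _
      have := mul_le_mul_of_nonneg_left hedges hk0
      linarith
    have hb := hbound w hw0
    rw [hgw] at hb
    rw [hFz] at hFw
    linarith [hFw.trans hb]
  set C := M * (Z.card : ℝ) with hC
  have hC0 : 0 ≤ C := mul_nonneg hM0 (Nat.cast_nonneg _)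
  have hkP : 0 < (k:ℝ) * P := by positivity
  set t := min 1 ((k * P) / (2 * (C + 1))) with htdef
  have ht0 : 0 < t := lt_min one_pos (by positivity)
  have ht1 : t ≤ 1 := min_le_left _ _
  have ht2 : t ≤ k * P / (2 * (C + 1)) := min_le_right _ _
  have hkey := key t ht0
  have hsplitpow : t ^ k = t ^ z₀ * t ^ (k - z₀) := by rw [← pow_add]; congr 1; omega
  have hpow_le : t ^ (k - z₀) ≤ t := by
    have h := pow_le_pow_of_le_one ht0.le ht1 (show 1 ≤ k - z₀ by omega)
    simpa using h
  have hpowpos : 0 < t ^ z₀ := pow_pos ht0 _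
  have hfin : (k:ℝ) * P ≤ C * t := by
    have h3 : M * ((Z.card : ℝ) * t ^ k) = C * t ^ (k - z₀) * t ^ z₀ := by
      rw [hsplitpow, hC]; ring
    rw [h3] at hkey
    have h4 : (k:ℝ) * P * t ^ z₀ ≤ C * t ^ (k - z₀) * t ^ z₀ := by
      calc (k:ℝ) * P * t ^ z₀ = (k:ℝ) * (t ^ z₀ * P) := by ring
        _ ≤ C * t ^ (k - z₀) * t ^ z₀ := hkey
    have h5 : (k:ℝ) * P ≤ C * t ^ (k - z₀) := le_of_mul_le_mul_right h4 hpowpos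
    calc (k:ℝ) * P ≤ C * t ^ (k - z₀) := h5
      _ ≤ C * t := mul_le_mul_of_nonneg_left hpow_le hC0
  have hden : (0:ℝ) < 2 * (C + 1) := by linarith
  have h6 : C * t ≤ C * (k * P / (2 * (C + 1))) := mul_le_mul_of_nonneg_left ht2 hC0
  have h7 : (k:ℝ) * P ≤ C * (k * P) / (2 * (C + 1)) := by
    rw [mul_div_assoc'] at *
    linarith [hfin.trans h6]
  have h8 : (k:ℝ) * P * (2 * (C + 1)) ≤ C * (k * P) := (le_div_iff₀ hden).mp h7
  nlinarith [mul_pos hkP (show (0:ℝ) < C + 2 by linarith)]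

/-- For a `k`-uniform hypergraph with Laplacian tensor `L` and signless
Laplacian tensor `Q`, `λ(L) ≤ λ(Q)`; and if moreover `G` is connected and `k` is even,
then `λ(L) = λ(Q)` if and only if `G` is odd-bipartite. -/
theorem largest_lap_le_largest_sign {n k : ℕ} (hk : 3 ≤ k) (hkn : k ≤ n)
    (E : Finset (Finset (Fin n))) (hunif : ∀ e ∈ E, e.card = k)
    (lamL lamQ : ℝ) (hL : IsLargestLapEig k E lamL) (hQ : IsLargestSignEig k E lamQ) :
    lamL ≤ lamQ ∧
    (IsConnectedH E → Even k → (lamL = lamQ ↔ IsOddBipartite E)) := by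
  have hn : 0 < n := by omega
  obtain ⟨M, hMeig, hM0, hMbound⟩ := exists_good_M hn hk E hunif
  have hMQ : M ≤ lamQ := hQ.2 M hMeig
  have hlamL0 : (0:ℝ) ≤ lamL := hL.2 0 (zero_lap_eig hn E)
  obtain ⟨x, hxne, hxeig⟩ := hL.1
  set z : Fin n → ℝ := fun i => |x i| with hzdef
  have hz0 : ∀ i, 0 ≤ z i := fun i => by rw [hzdef]; exact abs_nonneg _
  have hgz : 0 < gfun n k z := by
    obtain ⟨i0, hi0⟩ := Function.ne_iff.mp hxne
    simp only [Pi.zero_apply] at hi0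
    refine Finset.sum_pos' (fun i _ => pow_nonneg (hz0 i) k) ⟨i0, Finset.mem_univ i0, ?_⟩
    have hzi0 : 0 < z i0 := by rw [hzdef]; exact abs_pos.mpr hi0
    exact pow_pos hzi0 k
  have hlapF : lamL * gfun n k z ≤ Ffun n k E z := by
    rw [Ffun_eq_sum (by omega) E hunif z]
    unfold gfun
    rw [Finset.mul_sum]
    refine Finset.sum_le_sum fun i _ => ?_
    have h1 := mul_le_mul_of_nonneg_left (lap_abs_bound (by omega) hlamL0 hxeig i) (hz0 i)
    have hxp : z i * z i ^ (k - 1) = z i ^ k := by rw [← pow_succ']; congr 1; omega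
    have h2 : signAct k E (fun j => |x j|) i = signAct k E z i := by rw [← hzdef]
    rw [h2] at h1
    calc lamL * z i ^ k = z i * (lamL * z i ^ (k-1)) := by rw [← hxp]; ring
      _ ≤ z i * signAct k E z i := h1
  have hFzM : Ffun n k E z ≤ M * gfun n k z := hMbound z hz0
  have hLM : lamL ≤ M := le_of_mul_le_mul_right (hlapF.trans hFzM) hgz
  refine ⟨hLM.trans hMQ, fun hconn hkeven => ?_⟩
  have hEne : E.Nonempty := conn_edge (by omega) hconn
  constructor
  · intro heq
    have hMlam : M = lamL := le_antisymm (by rw [heq]; exact hMQ) hLM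
    have hFeq : Ffun n k E z = M * gfun n k z := le_antisymm hFzM (by rw [hMlam]; exact hlapF)
    have hpos : ∀ i, 0 < z i := no_zero_coord hk hunif hconn hMbound hz0 hgz hFeq
    have hlapsum := lap_eig_sum (show 1 ≤ k by omega) hunif hxeig
    have hgxz : gfun n k x = gfun n k z := by
      unfold gfun
      refine Finset.sum_congr rfl fun i _ => ?_
      have : z i ^ k = x i ^ k := by rw [hzdef]; exact hkeven.pow_abs (x i)
      rw [this]
    have hdegxz : ∑ i, (hdeg E i : ℝ) * x i ^ k = ∑ i, (hdeg E i : ℝ) * z i ^ k := by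
      refine Finset.sum_congr rfl fun i _ => ?_
      have : z i ^ k = x i ^ k := by rw [hzdef]; exact hkeven.pow_abs (x i)
      rw [this]
    have hkpos : (0:ℝ) < k := by positivity
    have hsum0 : ∑ e ∈ E, ((∏ j ∈ e, z j) + (∏ j ∈ e, x j)) = 0 := by
      have h1 : Ffun n k E z
          = (∑ i, (hdeg E i : ℝ) * z i ^ k) + k * ∑ e ∈ E, ∏ j ∈ e, z j := rfl
      rw [Finset.sum_add_distrib]
      have hA : (∑ i, (hdeg E i : ℝ) * z i ^ k) + k * ∑ e ∈ E, ∏ j ∈ e, z j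
          = lamL * gfun n k z := by rw [← h1, hFeq, hMlam]
      have hB : lamL * gfun n k z
          = (∑ i, (hdeg E i : ℝ) * z i ^ k) - k * ∑ e ∈ E, ∏ j ∈ e, x j := by
        rw [← hgxz, hlapsum, hdegxz]
      have h4 : (k:ℝ) * ((∑ e ∈ E, ∏ j ∈ e, z j) + ∑ e ∈ E, ∏ j ∈ e, x j) = 0 := by
        rw [mul_add]
        linarith
      exact (mul_eq_zero.mp h4).resolve_left (ne_of_gt hkpos)
    have hterm : ∀ e ∈ E, (0:ℝ) ≤ (∏ j ∈ e, z j) + (∏ j ∈ e, x j) := by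
      intro e _
      have habs : |∏ j ∈ e, x j| = ∏ j ∈ e, z j := by
        rw [Finset.abs_prod]
      have := neg_abs_le (∏ j ∈ e, x j)
      linarith
    have hall := (Finset.sum_eq_zero_iff_of_nonneg hterm).mp hsum0
    have hprodneg : ∀ e ∈ E, ∏ j ∈ e, x j < 0 := by
      intro e he
      have h := hall e he
      have hzpos : 0 < ∏ j ∈ e, z j := Finset.prod_pos fun j _ => hpos j
      linarith
    right
    refine ⟨Finset.univ.filter (fun i => x i < 0), ?_, ?_, ?_⟩
    · obtain ⟨e, he⟩ := hEne
      have hodd := neg_prod_odd (hprodneg e he)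
      have hcard : 0 < (e.filter (fun j => x j < 0)).card := by
        rcases hodd with ⟨m, hm⟩; omega
      obtain ⟨j0, hj0⟩ := Finset.card_pos.mp hcard
      intro hemp
      have hmem : j0 ∈ Finset.univ.filter (fun i => x i < 0) :=
        Finset.mem_filter.mpr ⟨Finset.mem_univ _, (Finset.mem_filter.mp hj0).2⟩
      rw [hemp] at hmem
      exact absurd hmem (Finset.notMem_empty _)
    · intro huniv
      obtain ⟨e, he⟩ := hEne
      have hodd := neg_prod_odd (hprodneg e he)
      have hfe : e.filter (fun j => x j < 0) = e := by
        refine Finset.filter_true_of_mem fun j hj => ?_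
        have hmem : j ∈ Finset.univ.filter (fun i => x i < 0) := by
          rw [huniv]; exact Finset.mem_univ j
        exact (Finset.mem_filter.mp hmem).2
      rw [hfe, hunif e he] at hodd
      exact (Nat.not_odd_iff_even.mpr hkeven) hodd
    · intro e he
      have hodd := neg_prod_odd (hprodneg e he)
      have hEq : e ∩ Finset.univ.filter (fun i => x i < 0) = e.filter (fun j => x j < 0) := by
        ext a
        simp only [Finset.mem_inter, Finset.mem_filter, Finset.mem_univ, true_and]
      rw [hEq]
      exact hodd
  · intro hob
    rcases hob with hWempty | ⟨V₁, hV1ne, hV1nuniv, hV1odd⟩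
    · exfalso
      obtain ⟨e, he⟩ := hEne
      rw [hWempty] at he
      exact absurd he (Finset.notMem_empty _)
    · obtain ⟨xq, hxqne, hxqeig⟩ := hQ.1
      have hlapQ : IsLapEig k E lamQ := sign_flip_eig hk hkeven hV1odd hxqne hxqeig
      exact le_antisymm (hLM.trans hMQ) (hL.2 lamQ hlapQ)
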